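/- Let μ be a probability measure on ℝ with μ ≠ δ_0, and define the η-transform η_μ(z) = 1 − z/G_μ(1/z) for z in the upper half-plane H, where G_μ is the Cauchy transform. Then for every z ∈ H one has 0 < arg z ≤ arg η_μ(z) ≤ arg z + π; in particular η_μ(H) ⊆ ℂ \ [0, ∞). -/

import Mathlib

open MeasureTheory Complex

/-- The Cauchy transform `G_μ(z) = ∫ 1/(z − x) dμ(x)` of a measure on `ℝ`. -/
noncomputable def cauchyTransform (μ : Measure ℝ) (z : ℂ) : ℂ :=
  ∫ x, (z - (x : ℂ))⁻¹ ∂μ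

/-- The η-transform `η_μ(z) = 1 − z / G_μ(1/z)`. -/
noncomputable def etaTransform (μ : Measure ℝ) (z : ℂ) : ℂ :=
  1 - z / cauchyTransform μ z⁻¹

/-- The argument of a complex number normalized to lie in `[0, 2π)`. -/
noncomputable def posArg (z : ℂ) : ℝ :=
  if Complex.arg z < 0 then Complex.arg z + 2 * Real.pi else Complex.arg z

private lemma eta_key (μ : Measure ℝ) [IsProbabilityMeasure μ]
    (hμ : μ ≠ Measure.dirac 0) {z : ℂ} (hz : 0 < z.im) :
    ∃ q : ℂ, etaTransform μ z = z * q ∧ 0 ≤ q.im ∧ q ≠ 0 := by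
  have hz0 : z ≠ 0 := fun h => by simp [h] at hz
  set w := z⁻¹ with hw
  have hwim : w.im < 0 := by
    rw [hw, inv_im]
    exact div_neg_of_neg_of_pos (by linarith) (normSq_pos.2 hz0)
  have hwim0 : w.im ≠ 0 := ne_of_lt hwim
  have hwx : ∀ x : ℝ, w - (x : ℂ) ≠ 0 := by
    intro x hx
    have : (w - (x:ℂ)).im = 0 := by rw [hx]; simp
    rw [sub_im, ofReal_im, sub_zero] at this
    linarith
  set h : ℝ → ℂ := fun x => (w - (x:ℂ))⁻¹ with hh
  have hcont : Continuous h := ((continuous_const.sub continuous_ofReal).inv₀ hwx)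
  have hlow : ∀ x : ℝ, -w.im ≤ ‖w - (x:ℂ)‖ := by
    intro x
    calc -w.im = |(w - (x:ℂ)).im| := by rw [sub_im, ofReal_im, sub_zero, abs_of_neg hwim]
    _ ≤ ‖w - (x:ℂ)‖ := abs_im_le_norm _
  have hbound : ∀ x : ℝ, ‖h x‖ ≤ (-w.im)⁻¹ := by
    intro x
    rw [hh]
    simp only [norm_inv]
    rw [inv_le_inv₀ (lt_of_lt_of_le (by linarith) (hlow x)) (by linarith)]
    exact hlow x
  have hint : Integrable h μ :=
    (integrable_const ((-w.im)⁻¹)).mono' hcont.aestronglyMeasurable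
      (Filter.Eventually.of_forall hbound)
  set f2 : ℝ → ℝ := fun x => normSq (h x) with hf2
  have hf2eq : ∀ x, f2 x = ‖h x‖ ^ 2 := fun x => by
    rw [hf2]; simp [Complex.normSq_eq_norm_sq, sq]
  have hf2int : Integrable f2 μ := by
    refine (integrable_const (((-w.im)⁻¹) ^ 2)).mono'
      ((continuous_normSq.comp hcont).aestronglyMeasurable)
      (Filter.Eventually.of_forall fun x => ?_)
    have : |f2 x| = ‖h x‖ ^ 2 := by rw [_root_.abs_of_nonneg (normSq_nonneg _)]; exact hf2eq x
    rw [Real.norm_eq_abs, this]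
    exact pow_le_pow_left₀ (norm_nonneg _) (hbound x) 2
  set G := cauchyTransform μ w with hG
  have hGdef : G = ∫ x, h x ∂μ := rfl
  set D := ∫ x, f2 x ∂μ with hD
  have hDpos : 0 < D := by
    rw [hD, integral_pos_iff_support_of_nonneg_ae
      (Filter.Eventually.of_forall fun x => normSq_nonneg _) hf2int]
    have : Function.support f2 = Set.univ := by
      ext x
      simp [hf2, Function.mem_support, normSq_eq_zero, hwx x, hh]
    rw [this]
    simp
  have him : ∀ x : ℝ, (h x).im = -w.im * f2 x := by
    intro x
    have hns : (0:ℝ) < normSq (w - (x:ℂ)) := normSq_pos.2 (hwx x)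
    have h1 : normSq (h x) = (normSq (w - (x:ℂ)))⁻¹ := by rw [hh]; exact normSq_inv _
    have h2 : (h x).im = -w.im / normSq (w - (x:ℂ)) := by
      rw [hh]; simp [inv_im]
    simp only [hf2]
    rw [h2, h1]
    field_simp
  have hGim : G.im = -w.im * D := by
    have h4 : ∫ x, (h x).im ∂μ = (∫ x, h x ∂μ).im := integral_im (μ := μ) (𝕜 := ℂ) hint
    rw [hGdef, ← h4]
    simp only [him]
    rw [integral_const_mul]
  have hGim_pos : 0 < G.im := by
    rw [hGim]; exact mul_pos (by linarith) hDpos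
  have hG0 : G ≠ 0 := fun hc => by simp [hc] at hGim_pos
  have hnsG : 0 < normSq G := normSq_pos.2 hG0
  -- expansion lemma
  have hexp : ∀ c : ℂ, ∫ x, normSq (h x - c) ∂μ = D - 2 * (G * (starRingEnd ℂ) c).re + normSq c := by
    intro c
    have hptw : ∀ x : ℝ, normSq (h x - c)
        = f2 x - 2 * ((h x * (starRingEnd ℂ) c).re) + normSq c := by
      intro x; rw [normSq_sub, hf2]; ring
    have hi1 : Integrable (fun x => (h x * (starRingEnd ℂ) c).re) μ :=
      (hint.mul_const _).re
    have hi2 : Integrable (fun x => f2 x - 2 * (h x * (starRingEnd ℂ) c).re) μ :=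
      hf2int.sub (hi1.const_mul 2)
    have h3 : ∫ x, (h x * (starRingEnd ℂ) c).re ∂μ = (G * (starRingEnd ℂ) c).re := by
      have h5 : ∫ x, (h x * (starRingEnd ℂ) c).re ∂μ
          = (∫ x, h x * (starRingEnd ℂ) c ∂μ).re :=
        integral_re (μ := μ) (𝕜 := ℂ) (hint.mul_const ((starRingEnd ℂ) c))
      rw [h5, integral_mul_const, ← hGdef]
    simp only [hptw]
    have h6 : ∫ x, 2 * (h x * (starRingEnd ℂ) c).re ∂μ
        = 2 * ∫ x, (h x * (starRingEnd ℂ) c).re ∂μ := integral_const_mul 2 _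
    rw [integral_add hi2 (integrable_const _), integral_sub hf2int (hi1.const_mul 2),
      h6, h3, integral_const]
    simp [← hD]
  have hCS : normSq G ≤ D := by
    have h0 : 0 ≤ ∫ x, normSq (h x - G) ∂μ := integral_nonneg fun x => normSq_nonneg _
    rw [hexp G] at h0
    have : (G * (starRingEnd ℂ) G).re = normSq G := by
      rw [mul_conj]; simp
    rw [this] at h0
    linarith
  set q := w - G⁻¹ with hq
  have hqim_eq : q.im = w.im * (normSq G - D) / normSq G := by
    have hGinv : (G⁻¹).im = -G.im / normSq G := inv_im G
    rw [hq, sub_im, hGinv, hGim]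
    field_simp
  have hqim : 0 ≤ q.im := by
    rw [hqim_eq]
    apply div_nonneg _ (normSq_nonneg G)
    nlinarith [hCS, hwim]
  have heta : etaTransform μ z = z * q := by
    rw [etaTransform, hq, ← hw, ← hG, mul_sub, hw, mul_inv_cancel₀ hz0, div_eq_mul_inv]
  have hGc : (G * (starRingEnd ℂ) G).re = normSq G := by rw [mul_conj]; simp
  have hq0 : q ≠ 0 := by
    intro hq00
    have hwG : w = G⁻¹ := by rwa [hq, sub_eq_zero] at hq00
    have hGz' : G = z := by rw [← inv_inv G, ← hwG, hw, inv_inv]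
    have hDeq : D = normSq G := by
      have h7 : q.im = 0 := by rw [hq00]; simp
      rw [hqim_eq] at h7
      rcases div_eq_zero_iff.mp h7 with h8 | h8
      · rcases mul_eq_zero.mp h8 with h9 | h9
        · exact absurd h9 hwim0
        · linarith
      · exact absurd h8 (ne_of_gt hnsG)
    have hint0 : ∫ x, normSq (h x - G) ∂μ = 0 := by
      rw [hexp G, hGc]; linarith
    have hi3 : Integrable (fun x => normSq (h x - G)) μ := by
      have hptw : (fun x => normSq (h x - G))
          = fun x => f2 x - 2 * ((h x * (starRingEnd ℂ) G).re) + normSq G :=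
        funext fun x => by rw [normSq_sub, hf2]; ring
      rw [hptw]
      exact (hf2int.sub (((hint.mul_const _).re).const_mul 2)).add (integrable_const _)
    have hae : ∀ᵐ x ∂μ, normSq (h x - G) = 0 :=
      (integral_eq_zero_iff_of_nonneg (fun x => normSq_nonneg _) hi3).mp hint0
    have hae0 : ∀ᵐ x ∂μ, x = 0 := by
      filter_upwards [hae] with x hx
      have h10 : h x = G := sub_eq_zero.mp (normSq_eq_zero.mp hx)
      have h11 : (w - (x:ℂ))⁻¹ = w⁻¹ := by
        rw [hw, inv_inv]
        exact h10.trans hGz'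
      have h12 : w - (x:ℂ) = w := inv_injective h11
      have h13 : (x:ℂ) = 0 := by
        have := sub_eq_self.mp h12
        exact this
      exact_mod_cast h13
    have hnull : μ {x : ℝ | ¬ x = 0} = 0 := ae_iff.mp hae0
    apply hμ
    ext s hs
    rw [Measure.dirac_apply' 0 hs]
    by_cases h0s : (0:ℝ) ∈ s
    · rw [Set.indicator_of_mem h0s]
      have hsub : sᶜ ⊆ {x : ℝ | ¬ x = 0} := by
        intro x hx hx0
        exact hx (by rw [hx0]; exact h0s)
      have hc : μ sᶜ = 0 := measure_mono_null hsub hnull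
      rw [(prob_compl_eq_zero_iff hs).mp hc]
      simp
    · rw [Set.indicator_of_notMem h0s]
      have hsub : s ⊆ {x : ℝ | ¬ x = 0} := by
        intro x hx hx0
        exact h0s (by rwa [hx0] at hx)
      exact measure_mono_null hsub hnull
  exact ⟨q, heta, hqim, hq0⟩



private lemma arg_pos_of_im_pos {z : ℂ} (hz : 0 < z.im) : 0 < Complex.arg z := by
  rcases (Complex.arg_nonneg_iff.2 hz.le).lt_or_eq with h | h
  · exact h
  · exact absurd (Complex.arg_eq_zero_iff.1 h.symm).2 (ne_of_gt hz)

/-- For a probability measure `μ ≠ δ_0` on `ℝ` and any `z` in the upper half-plane,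
`0 < arg z ≤ arg η_μ(z) ≤ arg z + π` (arguments normalized in `[0, 2π)`); in particular
`η_μ(z)` avoids the nonnegative real half-line `[0, ∞)`. -/
theorem arg_etaTransform_bounds (μ : Measure ℝ) [IsProbabilityMeasure μ]
    (hμ : μ ≠ Measure.dirac 0) :
    ∀ z : ℂ, 0 < z.im →
      (0 < posArg z ∧ posArg z ≤ posArg (etaTransform μ z) ∧
        posArg (etaTransform μ z) ≤ posArg z + Real.pi) ∧
      etaTransform μ z ∉ {w : ℂ | w.im = 0 ∧ 0 ≤ w.re} := by
  intro z hz
  obtain ⟨q, hη, hqim, hq0⟩ := eta_key μ hμ hz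
  have hz0 : z ≠ 0 := fun h => by simp [h] at hz
  have pi_pos := Real.pi_pos
  have hargz_nonneg : 0 ≤ arg z := arg_nonneg_iff.2 hz.le
  have hargz_pos : 0 < arg z := arg_pos_of_im_pos hz
  have hargz_lt : arg z < Real.pi := arg_lt_pi_iff.2 (Or.inr (ne_of_gt hz))
  have hpz : posArg z = arg z := if_neg (not_lt.2 hargz_nonneg)
  have hη0 : etaTransform μ z ≠ 0 := by rw [hη]; exact mul_ne_zero hz0 hq0
  have hset : etaTransform μ z ∉ {w : ℂ | w.im = 0 ∧ 0 ≤ w.re} := by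
    rintro ⟨h1, h2⟩
    have hqe : q = etaTransform μ z * z⁻¹ := by
      rw [hη]
      field_simp
    have h3 : q.im = (etaTransform μ z).re * (z⁻¹).im := by
      rw [hqe, mul_im, h1]; ring
    have h4 : (z⁻¹).im < 0 := by
      rw [inv_im]
      exact div_neg_of_neg_of_pos (by linarith) (normSq_pos.2 hz0)
    have h5 : (etaTransform μ z).re = 0 := by nlinarith [hqim]
    exact hη0 (Complex.ext (by simpa using h5) (by simpa using h1))
  have hbound2 : posArg z ≤ posArg (etaTransform μ z) ∧
      posArg (etaTransform μ z) ≤ posArg z + Real.pi := by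
    rcases hqim.lt_or_eq with hqpos | hqzero
    · have hargq_pos : 0 < arg q := arg_pos_of_im_pos hqpos
      have hargq_le : arg q ≤ Real.pi := arg_le_pi q
      have hsum_pos : 0 < arg z + arg q := by linarith
      have hpη : posArg (etaTransform μ z) = arg z + arg q := by
        by_cases hsle : arg z + arg q ≤ Real.pi
        · have harg : (z * q).arg = arg z + arg q :=
            (arg_mul_eq_add_arg_iff hz0 hq0).2 ⟨by linarith, hsle⟩
          unfold posArg
          rw [hη, harg, if_neg (not_lt.2 hsum_pos.le)]
        · push_neg at hsle
          have hco : (↑((z * q).arg) : Real.Angle) = ↑(arg z + arg q) := by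
            rw [arg_mul_coe_angle hz0 hq0, Real.Angle.coe_add]
          obtain ⟨k, hk⟩ := Real.Angle.angle_eq_iff_two_pi_dvd_sub.1 hco
          have hlb : -Real.pi < (z * q).arg := neg_pi_lt_arg _
          have hub : (z * q).arg ≤ Real.pi := arg_le_pi _
          have hk1 : (-2 : ℤ) < k := by
            have : (-2 : ℝ) < (k : ℝ) := by nlinarith
            exact_mod_cast this
          have hk2 : k < 0 := by
            have : (k : ℝ) < 0 := by nlinarith
            exact_mod_cast this
          have hkm : k = -1 := by omega
          rw [hkm] at hk
          push_cast at hk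
          have harg : (z * q).arg = arg z + arg q - 2 * Real.pi := by linarith
          unfold posArg
          rw [hη, harg, if_pos (by linarith)]
          ring
      rw [hpη, hpz]
      constructor <;> linarith
    · have hqre : q = ((q.re : ℝ) : ℂ) := Complex.ext rfl (by simp [← hqzero])
      have hqre0 : q.re ≠ 0 := fun h => hq0 (by rw [hqre, h]; simp)
      rcases hqre0.lt_or_gt with hneg | hpos
      · have hy : (0 : ℝ) < -q.re := by linarith
        have him_y : 0 < (((-q.re : ℝ) : ℂ) * z).im := by
          rw [mul_im]
          simp only [ofReal_re, ofReal_im, zero_mul, add_zero]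
          exact mul_pos hy hz
        have hcoe : ((-q.re : ℝ) : ℂ) = -q := by rw [ofReal_neg, ← hqre]
        have hηeq : etaTransform μ z = -(((-q.re : ℝ) : ℂ) * z) := by
          rw [hη, hcoe]; ring
        have harg : (etaTransform μ z).arg = arg z - Real.pi := by
          rw [hηeq, arg_neg_eq_arg_sub_pi_of_im_pos him_y, arg_real_mul z hy]
        have hpη : posArg (etaTransform μ z) = arg z + Real.pi := by
          unfold posArg
          rw [harg, if_pos (by linarith)]
          ring
        rw [hpη, hpz]
        constructor <;> linarith
      · have hηeq : etaTransform μ z = ((q.re : ℝ) : ℂ) * z := by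
          rw [hη, ← hqre]; ring
        have harg : (etaTransform μ z).arg = arg z := by rw [hηeq, arg_real_mul z hpos]
        have hpη : posArg (etaTransform μ z) = arg z := by
          unfold posArg
          rw [harg, if_neg (not_lt.2 hargz_nonneg)]
        rw [hpη, hpz]
        constructor <;> linarith
  exact ⟨⟨by rw [hpz]; exact hargz_pos, hbound2.1, hbound2.2⟩, hset⟩
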